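/- For every integer k ≥ 2, ∫_D [ ((1 − |w|²)(1 + |w|²)/2) · log(1/|w|²) − (1 − |w|²)² ] · |w|^{2k−4} d²w = 2πk/(k³ − k)², the integral over the open unit disc D being absolutely convergent. -/

import Mathlib

open MeasureTheory Set Metric

noncomputable def phi17 (m : ℕ) (r : ℝ) : ℝ :=
  (((1 - r ^ 2) * (1 + r ^ 2) / 2) * Real.log (1 / r ^ 2) - (1 - r ^ 2) ^ 2) * r ^ (2 * m)

noncomputable def psi17 (m : ℕ) (r : ℝ) : ℝ :=
  -((r ^ (2*m) - r ^ (2*m+4)) * (r * Real.log r))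
    - (r ^ (2*m+1) - 2*r^(2*m+3) + r^(2*m+5))

lemma phi17_mul (m : ℕ) (r : ℝ) : r * phi17 m r = psi17 m r := by
  simp only [phi17, psi17, one_div, Real.log_inv, Real.log_pow]
  push_cast
  ring

lemma psi17_continuous (m : ℕ) : Continuous (psi17 m) := by
  unfold psi17
  exact (((continuous_pow (2*m)).sub (continuous_pow (2*m+4))).mul
      Real.continuous_mul_log).neg.sub
    (((continuous_pow (2*m+1)).sub (continuous_const.mul (continuous_pow (2*m+3)))).add
      (continuous_pow (2*m+5)))

noncomputable def F17 (m : ℕ) (r : ℝ) : ℝ :=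
  (r^(2*m+2)/(2*(m:ℝ)+2)^2 - r^(2*m+2)/(2*(m:ℝ)+2) + 2*r^(2*m+4)/(2*(m:ℝ)+4)
      - r^(2*m+6)/(2*(m:ℝ)+6)^2 - r^(2*m+6)/(2*(m:ℝ)+6))
    + (r^(2*m+5)/(2*(m:ℝ)+6) - r^(2*m+1)/(2*(m:ℝ)+2)) * (r * Real.log r)

lemma F17_continuous (m : ℕ) : Continuous (F17 m) := by
  unfold F17
  exact ((((((continuous_pow _).div_const _).sub ((continuous_pow _).div_const _)).add
      ((continuous_const.mul (continuous_pow _)).div_const _)).sub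
      ((continuous_pow _).div_const _)).sub ((continuous_pow _).div_const _)).add
    ((((continuous_pow _).div_const _).sub ((continuous_pow _).div_const _)).mul
      Real.continuous_mul_log)

lemma F17_hasDerivAt (m : ℕ) {r : ℝ} (hr : r ≠ 0) :
    HasDerivAt (F17 m) (psi17 m r) r := by
  have hlog : HasDerivAt (fun x : ℝ => x * Real.log x) (Real.log r + 1) r := by
    have := (hasDerivAt_id' r).mul (Real.hasDerivAt_log hr)
    exact this.congr_deriv (by rw [mul_inv_cancel₀ hr]; ring)
  have h := (((((((hasDerivAt_pow (2*m+2) r).div_const ((2*(m:ℝ)+2)^2)).sub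
      ((hasDerivAt_pow (2*m+2) r).div_const (2*(m:ℝ)+2))).add
      (((hasDerivAt_pow (2*m+4) r).const_mul (2:ℝ)).div_const (2*(m:ℝ)+4))).sub
      ((hasDerivAt_pow (2*m+6) r).div_const ((2*(m:ℝ)+6)^2))).sub
      ((hasDerivAt_pow (2*m+6) r).div_const (2*(m:ℝ)+6))).add
      ((((hasDerivAt_pow (2*m+5) r).div_const (2*(m:ℝ)+6)).sub
        ((hasDerivAt_pow (2*m+1) r).div_const (2*(m:ℝ)+2))).mul hlog))
  have e1 : 2*m+2-1 = 2*m+1 := by omega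
  have e2 : 2*m+4-1 = 2*m+3 := by omega
  have e3 : 2*m+6-1 = 2*m+5 := by omega
  have e4 : 2*m+5-1 = 2*m+4 := by omega
  have e5 : 2*m+1-1 = 2*m := by omega
  rw [e1, e2, e3, e4, e5] at h
  refine h.congr_deriv ?_
  have h2 : (2*(m:ℝ)+2) ≠ 0 := by positivity
  have h4 : (2*(m:ℝ)+4) ≠ 0 := by positivity
  have h6 : (2*(m:ℝ)+6) ≠ 0 := by positivity
  unfold psi17
  push_cast
  simp only [Pi.sub_apply]
  field_simp
  ring

lemma F17_one (m : ℕ) : F17 m 1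
    = 1/(2*(m:ℝ)+2)^2 - 1/(2*(m:ℝ)+2) + 2/(2*(m:ℝ)+4)
      - 1/(2*(m:ℝ)+6)^2 - 1/(2*(m:ℝ)+6) := by
  simp [F17]

lemma F17_zero (m : ℕ) : F17 m 0 = 0 := by
  simp [F17]

lemma integral_psi17 (m : ℕ) : ∫ y in Ioo (0:ℝ) 1, psi17 m y
    = 1/(2*(m:ℝ)+2)^2 - 1/(2*(m:ℝ)+2) + 2/(2*(m:ℝ)+4)
      - 1/(2*(m:ℝ)+6)^2 - 1/(2*(m:ℝ)+6) := by
  rw [← integral_Ioc_eq_integral_Ioo, ← intervalIntegral.integral_of_le zero_le_one,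
    intervalIntegral.integral_eq_sub_of_hasDerivAt_of_le zero_le_one
      (F17_continuous m).continuousOn
      (fun x hx => F17_hasDerivAt m (ne_of_gt hx.1))
      ((psi17_continuous m).intervalIntegrable 0 1),
    F17_one, F17_zero, sub_zero]

noncomputable def f017 (m : ℕ) (r : ℝ) : ℝ := if r < 1 then phi17 m r else 0

lemma indicator_eq17 (m : ℕ) :
    (Metric.ball (0:ℂ) 1).indicator (fun w => phi17 m (‖w‖))
      = fun w : ℂ => f017 m ‖w‖ := by
  funext w
  simp only [Set.indicator, Metric.mem_ball, dist_zero_right, f017]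

lemma integrableOn17 (m : ℕ) :
    IntegrableOn (fun w : ℂ => phi17 m (‖w‖)) (Metric.ball 0 1) volume := by
  rw [← integrable_indicator_iff measurableSet_ball, indicator_eq17]
  -- 1D integrability on `Ioi 0`
  have h1 : IntegrableOn (fun y : ℝ => f017 m y * (ENNReal.ofReal (y ^ 1)).toReal)
      (Ioi (0:ℝ)) volume := by
    have hIoo : IntegrableOn (fun y : ℝ => f017 m y * (ENNReal.ofReal (y ^ 1)).toReal)
        (Ioo (0:ℝ) 1) volume := by
      refine (((psi17_continuous m).intervalIntegrable 0 1).1.mono_set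
        Ioo_subset_Ioc_self).congr_fun ?_ measurableSet_Ioo
      intro y hy
      simp only [f017, if_pos hy.2, pow_one, ENNReal.toReal_ofReal hy.1.le]
      rw [mul_comm]
      exact (phi17_mul m y).symm
    have hIci : IntegrableOn (fun y : ℝ => f017 m y * (ENNReal.ofReal (y ^ 1)).toReal)
        (Ici (1:ℝ)) volume := by
      refine (integrableOn_zero (μ := volume) (s := Ici (1:ℝ))).congr_fun ?_ measurableSet_Ici
      intro y hy
      simp [f017, not_lt.2 hy.out]
    exact (hIoo.union hIci).mono_set
      (fun y hy => (lt_or_ge y 1).elim (fun h => Or.inl ⟨hy, h⟩) Or.inr)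
  -- transfer to the subtype `Ioi 0`
  have h2 : Integrable (fun y : Set.Ioi (0:ℝ) => f017 m y.1 * (ENNReal.ofReal (y.1 ^ 1)).toReal)
      (volume.comap Subtype.val) := by
    rw [show (fun y : Set.Ioi (0:ℝ) => f017 m y.1 * (ENNReal.ofReal (y.1 ^ 1)).toReal)
        = (fun y : ℝ => f017 m y * (ENNReal.ofReal (y ^ 1)).toReal) ∘ Subtype.val from rfl,
      ← (MeasurableEmbedding.subtype_coe measurableSet_Ioi).integrable_map_iff,
      map_comap_subtype_coe measurableSet_Ioi]
    exact h1
  -- to `volumeIoiPow 1`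
  have h3 : Integrable (fun y : Set.Ioi (0:ℝ) => f017 m y.1)
      (Measure.volumeIoiPow 1) := by
    rw [Measure.volumeIoiPow,
      integrable_withDensity_iff ((measurable_subtype_coe.pow_const 1).ennreal_ofReal)
        (Filter.Eventually.of_forall fun _ => ENNReal.ofReal_lt_top)]
    exact h2
  -- to the product measure
  have h4 : Integrable (fun z : Metric.sphere (0:ℂ) 1 × Set.Ioi (0:ℝ) => f017 m z.2.1)
      ((volume : Measure ℂ).toSphere.prod (Measure.volumeIoiPow 1)) := by
    have := (integrable_const (1:ℝ) (μ := (volume : Measure ℂ).toSphere)).mul_prod h3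
    simpa using this
  -- to the complement of `{0}` in `ℂ`
  have h5 : Integrable (fun x : ({(0:ℂ)}ᶜ : Set ℂ) => f017 m ‖x.1‖)
      ((volume : Measure ℂ).comap Subtype.val) := by
    have hfin : Module.finrank ℝ ℂ - 1 = 1 := by rw [Complex.finrank_real_complex]
    have hmp := (volume : Measure ℂ).measurePreserving_homeomorphUnitSphereProd
    rw [hfin] at hmp
    have := (hmp.integrable_comp_emb
      (Homeomorph.measurableEmbedding _)).2 h4
    simpa [Function.comp_def, homeomorphUnitSphereProd_apply_snd_coe] using this
  -- back to `ℂ`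
  have h6 : Integrable (fun w : ℂ => f017 m ‖w‖) volume := by
    rw [show (volume : Measure ℂ) = volume.restrict ({(0:ℂ)}ᶜ) from
        (restrict_compl_singleton (μ := (volume : Measure ℂ)) (0:ℂ)).symm,
      ← map_comap_subtype_coe (measurableSet_singleton (0:ℂ)).compl,
      (MeasurableEmbedding.subtype_coe (measurableSet_singleton (0:ℂ)).compl).integrable_map_iff]
    exact h5
  exact h6

lemma integral17 (m : ℕ) :
    ∫ w in Metric.ball (0:ℂ) 1, phi17 m (‖w‖)
      = 2 * Real.pi * ∫ y in Ioo (0:ℝ) 1, psi17 m y := by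
  rw [← integral_indicator measurableSet_ball, indicator_eq17,
    integral_fun_norm_addHaar volume (f017 m)]
  rw [Complex.finrank_real_complex]
  have hv : (volume (Metric.ball (0:ℂ) 1)).toReal = Real.pi := by
    simp [Complex.volume_ball]
  rw [measureReal_def, hv]
  have hinner : ∫ y in Ioi (0:ℝ), y ^ (2 - 1) • f017 m y
      = ∫ y in Ioo (0:ℝ) 1, psi17 m y := by
    rw [setIntegral_congr_fun measurableSet_Ioi
      (g := (Ioo (0:ℝ) 1).indicator (psi17 m)) ?_]
    · rw [setIntegral_indicator measurableSet_Ioo,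
        Set.inter_eq_self_of_subset_right Set.Ioo_subset_Ioi_self]
    · intro y hy
      simp only [Set.indicator, Set.mem_Ioo, pow_one, smul_eq_mul, f017]
      by_cases h1 : y < 1
      · simp [h1, hy.out, phi17_mul]
      · simp [h1]
  rw [hinner]
  simp only [nsmul_eq_mul, smul_eq_mul, Nat.cast_ofNat]
  ring

/-- For every integer `k ≥ 2`,
`∫_D [ ((1-|w|²)(1+|w|²)/2) log(1/|w|²) - (1-|w|²)² ] |w|^{2k-4} d²w = 2πk/(k³-k)²`,
the integral over the open unit disc being absolutely convergent. -/
theorem stmt17 (k : ℕ) (hk : 2 ≤ k) :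
    IntegrableOn (fun w : ℂ =>
        (((1 - ‖w‖ ^ 2) * (1 + ‖w‖ ^ 2) / 2) *
            Real.log (1 / ‖w‖ ^ 2) - (1 - ‖w‖ ^ 2) ^ 2) *
          ‖w‖ ^ (2 * k - 4))
      (Metric.ball (0 : ℂ) 1) volume ∧
    ∫ w in Metric.ball (0 : ℂ) 1,
        (((1 - ‖w‖ ^ 2) * (1 + ‖w‖ ^ 2) / 2) *
            Real.log (1 / ‖w‖ ^ 2) - (1 - ‖w‖ ^ 2) ^ 2) *
          ‖w‖ ^ (2 * k - 4)
      = 2 * Real.pi * (k : ℝ) / ((k : ℝ) ^ 3 - (k : ℝ)) ^ 2 := by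
  obtain ⟨m, rfl⟩ : ∃ m, k = m + 2 := ⟨k - 2, by omega⟩
  have hexp : 2 * (m + 2) - 4 = 2 * m := by omega
  have hfun : (fun w : ℂ =>
      (((1 - ‖w‖ ^ 2) * (1 + ‖w‖ ^ 2) / 2) *
          Real.log (1 / ‖w‖ ^ 2) - (1 - ‖w‖ ^ 2) ^ 2) *
        ‖w‖ ^ (2 * (m + 2) - 4)) = fun w : ℂ => phi17 m (‖w‖) := by
    funext w
    rw [hexp]
    rfl
  rw [hfun]
  refine ⟨integrableOn17 m, ?_⟩
  rw [integral17 m, integral_psi17 m]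
  have h2 : (2*(m:ℝ)+2) ≠ 0 := by positivity
  have h4 : (2*(m:ℝ)+4) ≠ 0 := by positivity
  have h6 : (2*(m:ℝ)+6) ≠ 0 := by positivity
  have hm : (0:ℝ) ≤ (m:ℝ) := Nat.cast_nonneg m
  have hden : ((m:ℝ)+2)^3 - ((m:ℝ)+2) ≠ 0 := by
    have : ((m:ℝ)+2)^3 - ((m:ℝ)+2) ≥ 6 := by nlinarith [pow_nonneg hm 3, sq_nonneg (m:ℝ)]
    linarith
  have hden2 : ((m:ℝ)+2)^2 - 1 ≠ 0 := by nlinarith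
  push_cast
  field_simp
  ring
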